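/- Let H, a, ρ be Hermitian matrices on ℂ^D with a, ρ positive semidefinite and tr(a) = tr(ρ) = 1. Define η = C (|+⟩⟨+| ⊗ a ⊗ ρ) C† on ℂ² ⊗ ℂ^D ⊗ ℂ^D, where C = |0⟩⟨0| ⊗ 1 ⊗ 1 + |1⟩⟨1| ⊗ S with S the swap operator, and |+⟩ = (|0⟩+|1⟩)/√2. Then 2·tr((σ_y ⊗ H ⊗ 1)·η) = i·tr([H, a]·ρ), where σ_y is the Pauli-Y matrix. -/

import Mathlib

open Matrix Complex
open scoped Kronecker ComplexOrder

/-- The swap operator on `ℂ^D ⊗ ℂ^D`. -/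
def swapMatrix (D : ℕ) : Matrix (Fin D × Fin D) (Fin D × Fin D) ℂ :=
  fun p q => if p.1 = q.2 ∧ p.2 = q.1 then 1 else 0

/-- The Pauli-Y matrix. -/
def pauliY : Matrix (Fin 2) (Fin 2) ℂ := !![0, -I; I, 0]

/-- The projector `|+⟩⟨+|` onto `(|0⟩+|1⟩)/√2`. -/
noncomputable def plusProj : Matrix (Fin 2) (Fin 2) ℂ := (1/2 : ℂ) • !![1, 1; 1, 1]

/-- The controlled-swap operator `C = |0⟩⟨0| ⊗ 1 ⊗ 1 + |1⟩⟨1| ⊗ S`. -/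
def cswap (D : ℕ) : Matrix (Fin 2 × (Fin D × Fin D)) (Fin 2 × (Fin D × Fin D)) ℂ :=
  (Matrix.single 0 0 (1 : ℂ)) ⊗ₖ (1 : Matrix (Fin D × Fin D) (Fin D × Fin D) ℂ)
    + (Matrix.single 1 1 (1 : ℂ)) ⊗ₖ swapMatrix D

lemma core {D : ℕ} (A B : Matrix (Fin D) (Fin D) ℂ) :
    ((A ⊗ₖ B) * swapMatrix D).trace = (A * B).trace := by
  simp only [Matrix.trace, Matrix.diag, Matrix.mul_apply, swapMatrix, kroneckerMap_apply,
    Fintype.sum_prod_type, ite_and]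
  simp [Finset.mul_sum, Finset.sum_ite_eq, Finset.sum_ite_eq', mul_ite, ite_mul]

lemma cswap_herm {D : ℕ} : (cswap D)ᴴ = cswap D := by
  ext p q
  simp only [cswap, conjTranspose_apply, Matrix.add_apply, kroneckerMap_apply, swapMatrix,
    Matrix.one_apply, Matrix.single, Matrix.of_apply]
  split <;> split <;> split <;> split <;> split <;> split <;> split <;> split <;>
    simp_all [Prod.ext_iff, eq_comm, and_comm]

lemma hY1 : (pauliY * (Matrix.single 0 0 (1:ℂ) * plusProj * Matrix.single 0 0 (1:ℂ))).trace = 0 := by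
  simp only [Matrix.trace_fin_two, Matrix.mul_apply, Fin.sum_univ_two, pauliY, plusProj,
    Matrix.smul_apply, Matrix.single, Matrix.of_apply, Matrix.cons_val', Matrix.cons_val_zero,
    Matrix.cons_val_one, Matrix.head_cons, Matrix.empty_val', Matrix.cons_val_fin_one, Matrix.head_fin_const]
  norm_num

lemma hY4 : (pauliY * (Matrix.single 1 1 (1:ℂ) * plusProj * Matrix.single 1 1 (1:ℂ))).trace = 0 := by
  simp only [Matrix.trace_fin_two, Matrix.mul_apply, Fin.sum_univ_two, pauliY, plusProj,
    Matrix.smul_apply, Matrix.single, Matrix.of_apply, Matrix.cons_val', Matrix.cons_val_zero,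
    Matrix.cons_val_one, Matrix.head_cons, Matrix.empty_val', Matrix.cons_val_fin_one, Matrix.head_fin_const]
  norm_num

lemma hY2 : (pauliY * (Matrix.single 0 0 (1:ℂ) * plusProj * Matrix.single 1 1 (1:ℂ))).trace = I/2 := by
  simp only [Matrix.trace_fin_two, Matrix.mul_apply, Fin.sum_univ_two, pauliY, plusProj,
    Matrix.smul_apply, Matrix.single, Matrix.of_apply, Matrix.cons_val', Matrix.cons_val_zero,
    Matrix.cons_val_one, Matrix.head_cons, Matrix.empty_val', Matrix.cons_val_fin_one, Matrix.head_fin_const]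
  norm_num
  ring

lemma hY3 : (pauliY * (Matrix.single 1 1 (1:ℂ) * plusProj * Matrix.single 0 0 (1:ℂ))).trace = -(I/2) := by
  simp only [Matrix.trace_fin_two, Matrix.mul_apply, Fin.sum_univ_two, pauliY, plusProj,
    Matrix.smul_apply, Matrix.single, Matrix.of_apply, Matrix.cons_val', Matrix.cons_val_zero,
    Matrix.cons_val_one, Matrix.head_cons, Matrix.empty_val', Matrix.cons_val_fin_one, Matrix.head_fin_const]
  norm_num
  ring

/-- Measuring `σ_y ⊗ H ⊗ 1` on the controlled-swap state `η` yields the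
commutator expectation: `2 tr((σ_y ⊗ H ⊗ 1) η) = i tr([H,a] ρ)`. -/
theorem cswap_observable_eq_commutator {D : ℕ}
    (H a ρ : Matrix (Fin D) (Fin D) ℂ)
    (hH : H.IsHermitian)
    (ha : a.PosSemidef) (hatr : a.trace = 1)
    (hρ : ρ.PosSemidef) (hρtr : ρ.trace = 1) :
    2 * ((pauliY ⊗ₖ (H ⊗ₖ (1 : Matrix (Fin D) (Fin D) ℂ)))
          * (cswap D * (plusProj ⊗ₖ (a ⊗ₖ ρ)) * (cswap D)ᴴ)).trace
      = I * ((H * a - a * H) * ρ).trace := by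
  have t2 : ((H ⊗ₖ (1 : Matrix (Fin D) (Fin D) ℂ)) * ((a ⊗ₖ ρ) * swapMatrix D)).trace
      = (H * a * ρ).trace := by
    rw [← mul_assoc, ← Matrix.mul_kronecker_mul, Matrix.one_mul, core]
  have t3 : ((H ⊗ₖ (1 : Matrix (Fin D) (Fin D) ℂ)) * (swapMatrix D * (a ⊗ₖ ρ))).trace
      = (a * H * ρ).trace := by
    rw [Matrix.trace_mul_comm, mul_assoc, Matrix.trace_mul_comm, ← Matrix.mul_kronecker_mul,
      Matrix.mul_one, core]
  rw [cswap_herm]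
  simp only [cswap, add_mul, mul_add, ← Matrix.mul_kronecker_mul, Matrix.one_mul, Matrix.mul_one,
    Matrix.trace_add, Matrix.trace_kronecker]
  rw [hY1, hY2, hY3, hY4, t2, t3]
  simp only [Matrix.sub_mul, Matrix.trace_sub]
  ring
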